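/- arXiv:2012.06019 — 2 statements merged into one kernel-verified Lean document; each statement's English description precedes it below -/
import Mathlib

section
/- For every real s < 1, the limit lim_{z → 1⁻} (−ln z)^{1−s} · Li_s(z) = Γ(1−s) holds, where Γ denotes the Gamma function; equivalently, Li_s(z) is asymptotic to Γ(1−s)(−ln z)^{s−1} as z → 1 from the left. -/
open Set MeasureTheory Filter Topology

namespace PolyAux

noncomputable def pf (s x : ℝ) : ℝ := x ^ (-s) * Real.exp (-x)

lemma pf_nonneg {s x : ℝ} (hx : 0 ≤ x) : 0 ≤ pf s x :=
  mul_nonneg (Real.rpow_nonneg hx _) (Real.exp_pos _).le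

lemma pf_cont {s : ℝ} : ContinuousOn (pf s) (Ioi 0) := fun x hx =>
  ((Real.continuousAt_rpow_const x (-s) (Or.inl (ne_of_gt hx))).mul
    ((Real.continuous_exp.comp continuous_neg).continuousAt)).continuousWithinAt

lemma pf_integrableOn {s : ℝ} (hs : s < 1) : IntegrableOn (pf s) (Ioi 0) := by
  have := Real.GammaIntegral_convergent (s := 1 - s) (by linarith)
  refine this.congr_fun (fun x hx => ?_) measurableSet_Ioi
  simp only [pf]
  rw [mul_comm]
  norm_num

lemma pf_hasDeriv {s x : ℝ} (hx : 0 < x) :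
    HasDerivAt (pf s) (x ^ (-s - 1) * Real.exp (-x) * (-s - x)) x := by
  have h1 : HasDerivAt (fun y : ℝ => y ^ (-s)) (-s * x ^ (-s - 1)) x :=
    Real.hasDerivAt_rpow_const (Or.inl hx.ne')
  have h2 : HasDerivAt (fun y : ℝ => Real.exp (-y)) (-Real.exp (-x)) x := by
    simpa [Function.comp_def] using (Real.hasDerivAt_exp (-x)).comp x (hasDerivAt_neg x)
  have h3 := h1.mul h2
  have hxs : x ^ (-s) = x ^ (-s - 1) * x := by
    rw [← Real.rpow_add_one hx.ne']; ring_nf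
  refine h3.congr_deriv ?_
  rw [hxs]; ring

lemma pf_mono {s : ℝ} : MonotoneOn (pf s) (Icc 0 (max 0 (-s))) := by
  rcases le_or_gt (-s) 0 with h | h
  · rw [max_eq_left h]
    intro x hx y hy _
    rw [Icc_self] at hx hy
    rw [mem_singleton_iff] at hx hy
    rw [hx, hy]
  · rw [max_eq_right h.le]
    apply monotoneOn_of_deriv_nonneg (convex_Icc _ _)
    · intro x _
      exact ((Real.continuousAt_rpow_const x (-s) (Or.inr h.le)).mul
        ((Real.continuous_exp.comp continuous_neg).continuousAt)).continuousWithinAt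
    · rw [interior_Icc]
      exact fun x hx => (pf_hasDeriv hx.1).differentiableAt.differentiableWithinAt
    · rw [interior_Icc]
      intro x hx
      rw [(pf_hasDeriv hx.1).deriv]
      have hx0 : 0 < x := hx.1
      have h1 : 0 ≤ -s - x := by linarith [hx.2]
      positivity
  
lemma pf_anti {s : ℝ} : AntitoneOn (pf s) (Ici (max 0 (-s)) ∩ Ioi 0) := by
  apply antitoneOn_of_deriv_nonpos ((convex_Ici _).inter (convex_Ioi _))
  · exact pf_cont.mono inter_subset_right
  · rw [interior_inter, interior_Ici, interior_Ioi]
    exact fun x hx => (pf_hasDeriv hx.2).differentiableAt.differentiableWithinAt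
  · rw [interior_inter, interior_Ici, interior_Ioi]
    intro x hx
    rw [(pf_hasDeriv hx.2).deriv]
    have h1 : -s - x ≤ 0 := by
      have := hx.1
      have : max 0 (-s) < x := hx.1
      have : -s ≤ max 0 (-s) := le_max_right _ _
      linarith
    have hx2 : 0 < x := hx.2
    have h2 : 0 ≤ x ^ (-s - 1) * Real.exp (-x) := by positivity
    exact mul_nonpos_of_nonneg_of_nonpos h2 h1

lemma pf_le_C {s x : ℝ} (hs0 : s ≤ 0) (hx : 0 ≤ x) : pf s x ≤ pf s (max 0 (-s)) := by
  rcases eq_or_lt_of_le hs0 with h | h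
  · subst h
    simp only [pf, neg_zero, Real.rpow_zero, one_mul, max_self]
    exact Real.exp_le_exp.mpr (by linarith)
  · have ha : 0 < -s := by linarith
    rw [max_eq_right ha.le]
    rcases eq_or_lt_of_le hx with hx0 | hx0
    · rw [← hx0]
      simp only [pf, Real.zero_rpow (ne_of_gt ha), zero_mul]
      exact pf_nonneg ha.le
    · simp only [pf]
      rw [Real.rpow_def_of_pos hx0, Real.rpow_def_of_pos ha, ← Real.exp_add, ← Real.exp_add]
      rw [Real.exp_le_exp]
      have hlog : Real.log (x / (-s)) ≤ x / (-s) - 1 :=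
        Real.log_le_sub_one_of_pos (div_pos hx0 ha)
      rw [Real.log_div hx0.ne' ha.ne'] at hlog
      have key : (-s) * (Real.log x - Real.log (-s)) ≤ x - (-s) := by
        calc (-s) * (Real.log x - Real.log (-s)) ≤ (-s) * (x / (-s) - 1) :=
              mul_le_mul_of_nonneg_left hlog ha.le
          _ = x - (-s) := by
              rw [mul_sub, mul_one, ← mul_div_assoc, mul_div_cancel_left₀ _ (ne_of_gt ha)]
      linarith [key]


noncomputable def II (s : ℝ) : ℝ := ∫ x in Ioi (0:ℝ), pf s x
noncomputable def WW (s t : ℝ) : ℝ := ∫ x in Ioc (0:ℝ) t, pf s x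
noncomputable def CC (s : ℝ) : ℝ := pf s (max 0 (-s))
noncomputable def EE (s t : ℝ) : ℝ := 2 * (t * CC s + WW s t)

lemma CC_nonneg {s : ℝ} : 0 ≤ CC s := pf_nonneg (le_max_left _ _)

lemma pf_int_Ioc {s c d : ℝ} (hs : s < 1) (hc : 0 ≤ c) : IntegrableOn (pf s) (Ioc c d) :=
  (pf_integrableOn hs).mono_set (fun x hx => lt_of_le_of_lt hc hx.1)

lemma WW_nonneg {s t : ℝ} : 0 ≤ WW s t :=
  setIntegral_nonneg measurableSet_Ioc (fun x hx => pf_nonneg hx.1.le)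

lemma gle {s x : ℝ} (hs : s < 1) : (∫ y in Ioc (0:ℝ) x, pf s y) ≤ II s := by
  apply setIntegral_mono_set (pf_integrableOn hs)
  · exact (ae_restrict_iff' measurableSet_Ioi).2 (ae_of_all _ (fun y hy => pf_nonneg (le_of_lt hy)))
  · exact HasSubset.Subset.eventuallyLE Ioc_subset_Ioi_self

lemma gadd {s c d : ℝ} (hs : s < 1) (h0c : 0 ≤ c) (hcd : c ≤ d) :
    (∫ y in Ioc (0:ℝ) c, pf s y) + (∫ y in Ioc c d, pf s y) = ∫ y in Ioc (0:ℝ) d, pf s y := by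
  rw [← setIntegral_union (Set.Ioc_disjoint_Ioc_of_le le_rfl) measurableSet_Ioc
    (pf_int_Ioc hs le_rfl) (pf_int_Ioc hs h0c), Set.Ioc_union_Ioc_eq_Ioc h0c hcd]

lemma const_le_W {s t : ℝ} (hs : s < 1) (ht : 0 < t) (hs0 : 0 < s) :
    t * pf s t ≤ WW s t := by
  have h : ∀ y ∈ Ioc (0:ℝ) t, pf s t ≤ pf s y := by
    intro y hy
    have ha0 : max 0 (-s) = 0 := max_eq_left (by linarith)
    apply pf_anti (by rw [ha0]; exact ⟨hy.1.le, hy.1⟩) (by rw [ha0]; exact ⟨ht.le, ht⟩) hy.2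
  calc t * pf s t = ∫ _ in Ioc (0:ℝ) t, pf s t := by
        rw [setIntegral_const, Real.volume_real_Ioc_of_le ht.le, smul_eq_mul]
        ring_nf
    _ ≤ WW s t := setIntegral_mono_on (integrableOn_const (by
          rw [Real.volume_Ioc]; exact ENNReal.ofReal_ne_top)) (pf_int_Ioc hs le_rfl)
          measurableSet_Ioc h

lemma EX {s t x : ℝ} (hs : s < 1) (ht : 0 < t) (hx : 0 ≤ x) (hx' : t ≤ x ∨ x = 0) :
    t * pf s x ≤ t * CC s + WW s t := by
  rcases le_or_gt s 0 with hs0 | hs0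
  · have h1 : t * pf s x ≤ t * CC s := mul_le_mul_of_nonneg_left (pf_le_C hs0 hx) ht.le
    linarith [WW_nonneg (s := s) (t := t)]
  · have hC : CC s = 0 := by
      simp only [CC, max_eq_left (by linarith : -s ≤ 0), pf,
        Real.zero_rpow (by linarith : -s ≠ 0), zero_mul]
    rcases hx' with hx' | hx'
    · have h1 : pf s x ≤ pf s t := by
        have ha0 : max 0 (-s) = 0 := max_eq_left (by linarith)
        apply pf_anti (by rw [ha0]; exact ⟨ht.le, ht⟩)
          (by rw [ha0]; exact ⟨(ht.trans_le hx').le, ht.trans_le hx'⟩) hx'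
      have := const_le_W hs ht hs0
      rw [hC]
      nlinarith
    · subst hx'
      have : pf s 0 = 0 := by
        simp [pf, Real.zero_rpow (by linarith : -s ≠ 0)]
      rw [this, hC]
      simpa using WW_nonneg (s := s) (t := t)

lemma WIN {s t c : ℝ} (hs : s < 1) (ht : 0 < t)
    (hc : c = t * ⌊max 0 (-s) / t⌋₊) :
    (∫ y in Ioc c (c + t), pf s y) ≤ t * CC s + WW s t := by
  have hc0 : 0 ≤ c := by rw [hc]; positivity
  rcases le_or_gt s 0 with hs0 | hs0
  · have h1 : (∫ y in Ioc c (c + t), pf s y) ≤ ∫ _ in Ioc c (c + t), CC s := by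
      apply setIntegral_mono_on (pf_int_Ioc hs hc0) (integrableOn_const (by
        rw [Real.volume_Ioc]; exact ENNReal.ofReal_ne_top)) measurableSet_Ioc
      exact fun y hy => pf_le_C hs0 (hc0.trans hy.1.le)
    have h2 : (∫ _ in Ioc c (c + t), CC s) = t * CC s := by
      rw [setIntegral_const, Real.volume_real_Ioc_of_le (by linarith), smul_eq_mul]
      ring_nf
    linarith [WW_nonneg (s := s) (t := t)]
  · have hN : (⌊max 0 (-s) / t⌋₊ : ℝ) = 0 := by
      rw [max_eq_left (by linarith : -s ≤ 0)]
      simp [Nat.floor_eq_zero, zero_div]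
    rw [hc, hN, mul_zero] at *
    have : (∫ y in Ioc (0:ℝ) (0 + t), pf s y) = WW s t := by rw [zero_add]; rfl
    rw [this]
    have : 0 ≤ t * CC s := mul_nonneg ht.le CC_nonneg
    linarith


section MainEst

variable {s t : ℝ}

lemma floor_facts (ht : 0 < t) :
    t * (⌊max 0 (-s) / t⌋₊ : ℝ) ≤ max 0 (-s) ∧ max 0 (-s) < t * ((⌊max 0 (-s) / t⌋₊ : ℝ) + 1) := by
  have ha0n : (0:ℝ) ≤ max 0 (-s) := le_max_left _ _
  constructor
  · have h := Nat.floor_le (div_nonneg ha0n ht.le)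
    calc t * (⌊max 0 (-s) / t⌋₊ : ℝ) ≤ t * (max 0 (-s) / t) := by nlinarith
      _ = max 0 (-s) := by field_simp
  · have h := Nat.lt_floor_add_one (max 0 (-s) / t)
    calc max 0 (-s) = t * (max 0 (-s) / t) := by field_simp
      _ < t * ((⌊max 0 (-s) / t⌋₊ : ℝ) + 1) := by nlinarith

lemma Fmono (ht : 0 < t) :
    MonotoneOn (fun x : ℝ => pf s (t * x)) (Icc (0:ℝ) (⌊max 0 (-s) / t⌋₊ : ℕ)) := by
  intro x hx y hy hxy
  have hNt := (floor_facts (s := s) ht).1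
  exact pf_mono
    ⟨mul_nonneg ht.le hx.1, (mul_le_mul_of_nonneg_left hx.2 ht.le).trans hNt⟩
    ⟨mul_nonneg ht.le hy.1, (mul_le_mul_of_nonneg_left hy.2 ht.le).trans hNt⟩
    (mul_le_mul_of_nonneg_left hxy ht.le)

lemma Fanti (ht : 0 < t) :
    AntitoneOn (fun x : ℝ => pf s (t * x)) (Ici ((⌊max 0 (-s) / t⌋₊ : ℝ) + 1)) := by
  intro x hx y hy hxy
  have hNt' := (floor_facts (s := s) ht).2
  have ha0n : (0:ℝ) ≤ max 0 (-s) := le_max_left _ _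
  have hxx : max 0 (-s) < t * x := hNt'.trans_le (mul_le_mul_of_nonneg_left hx ht.le)
  have hyy : max 0 (-s) < t * y := hNt'.trans_le (mul_le_mul_of_nonneg_left hy ht.le)
  exact pf_anti ⟨hxx.le, lt_of_le_of_lt ha0n hxx⟩ ⟨hyy.le, lt_of_le_of_lt ha0n hyy⟩
    (mul_le_mul_of_nonneg_left hxy ht.le)

lemma hscale (ht : 0 < t) (c d : ℝ) :
    (∫ x in c..d, pf s (t * x)) = t⁻¹ * ∫ y in (t*c)..(t*d), pf s y := by
  rw [intervalIntegral.integral_comp_mul_left (fun y => pf s y) ht.ne']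
  simp [smul_eq_mul]

lemma upper (hs : s < 1) (ht : 0 < t) (K : ℕ) :
    ∑ n ∈ Finset.range (⌊max 0 (-s) / t⌋₊ + 1 + K), (t * pf s (t * ((n:ℝ) + 1)))
      ≤ II s + EE s t := by
  set N := ⌊max 0 (-s) / t⌋₊ with hNdef
  set fN : ℕ → ℝ := fun n => pf s (t * n) with hfN
  have hfN0 : ∀ n : ℕ, 0 ≤ fN n := fun n => pf_nonneg (by positivity)
  have hNt := (floor_facts (s := s) ht).1
  have hNt' := (floor_facts (s := s) ht).2
  rw [← hNdef] at hNt hNt'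
  -- rewrite the sum in terms of fN
  have hsum0 : ∑ n ∈ Finset.range (N + 1 + K), (t * pf s (t * ((n:ℝ) + 1)))
      = ∑ n ∈ Finset.range (N + 1 + K), t * fN (n + 1) := by
    refine Finset.sum_congr rfl (fun n _ => ?_)
    simp only [hfN]
    congr 2
    push_cast
    ring
  rw [hsum0]
  rw [Finset.sum_range_add, Finset.sum_range_succ]
  -- Part A : ∑_{n < N} t * fN (n+1)
  have hA : ∑ n ∈ Finset.range N, t * fN (n + 1)
      ≤ (∫ y in Ioc (0:ℝ) (t*N), pf s y) + (t * CC s + WW s t) := by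
    have e2 := Finset.sum_range_succ' (fun i : ℕ => fN i) N
    have e1 := Finset.sum_range_succ (fun i : ℕ => fN i) N
    have hAsum : ∑ n ∈ Finset.range N, fN (n + 1)
        = (∑ i ∈ Finset.range N, fN i) + fN N - fN 0 := by
      linarith [e1, e2]
    have hint : ∑ i ∈ Finset.range N, fN i ≤ t⁻¹ * ∫ y in Ioc (0:ℝ) (t*N), pf s y := by
      have h := MonotoneOn.sum_le_integral (x₀ := 0) (a := N)
        (f := fun x : ℝ => pf s (t * x)) (by simpa using Fmono (s := s) ht)
      have hconv : ∑ i ∈ Finset.range N, pf s (t * ((0:ℝ) + (i:ℕ))) = ∑ i ∈ Finset.range N, fN i := by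
        refine Finset.sum_congr rfl (fun n _ => ?_)
        simp [hfN]
      rw [hconv] at h
      calc ∑ i ∈ Finset.range N, fN i ≤ ∫ x in (0:ℝ)..(0 + N), pf s (t * x) := h
        _ = t⁻¹ * ∫ y in (t*0)..(t*(0 + N : ℝ)), pf s y := hscale ht _ _
        _ = t⁻¹ * ∫ y in Ioc (0:ℝ) (t*N), pf s y := by
            rw [mul_zero, zero_add, intervalIntegral.integral_of_le (by positivity)]
    have hexc : t * fN N ≤ t * CC s + WW s t := by
      rcases Nat.eq_zero_or_pos N with h0 | h0
      · rw [h0]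
        exact EX hs ht (by simp) (Or.inr (by simp))
      · refine EX hs ht (by positivity) (Or.inl ?_)
        have : (1:ℝ) ≤ (N:ℝ) := by exact_mod_cast h0
        nlinarith
    calc ∑ n ∈ Finset.range N, t * fN (n + 1) = t * ∑ n ∈ Finset.range N, fN (n + 1) := by
          rw [Finset.mul_sum]
      _ = t * ((∑ i ∈ Finset.range N, fN i) + fN N - fN 0) := by rw [hAsum]
      _ ≤ t * ((∑ i ∈ Finset.range N, fN i) + fN N) := by nlinarith [hfN0 0]
      _ = t * (∑ i ∈ Finset.range N, fN i) + t * fN N := by ring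
      _ ≤ t * (t⁻¹ * ∫ y in Ioc (0:ℝ) (t*N), pf s y) + (t * CC s + WW s t) := by
          have := mul_le_mul_of_nonneg_left hint ht.le
          linarith [hexc]
      _ = (∫ y in Ioc (0:ℝ) (t*N), pf s y) + (t * CC s + WW s t) := by
          rw [← mul_assoc, mul_inv_cancel₀ ht.ne', one_mul]
  -- exceptional term
  have hexc2 : t * fN (N + 1) ≤ t * CC s + WW s t := by
    refine EX hs ht (by positivity) (Or.inl ?_)
    push_cast
    nlinarith [Nat.cast_nonneg (α := ℝ) N]
  -- Part B
  have hB : ∑ i ∈ Finset.range K, t * fN (N + 1 + i + 1)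
      ≤ ∫ y in Ioc (t*((N:ℝ)+1)) (t*((N:ℝ)+1+K)), pf s y := by
    have h := AntitoneOn.sum_le_integral (x₀ := (N:ℝ) + 1) (a := K)
      (f := fun x : ℝ => pf s (t * x))
      ((Fanti (s := s) ht).mono (fun x hx => hx.1))
    have hconv : ∑ i ∈ Finset.range K, pf s (t * (((N:ℝ) + 1) + ((i+1 : ℕ) : ℝ)))
        = ∑ i ∈ Finset.range K, fN (N + 1 + i + 1) := by
      refine Finset.sum_congr rfl (fun n _ => ?_)
      simp only [hfN]
      congr 2
      push_cast
      ring
    rw [hconv] at h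
    calc ∑ i ∈ Finset.range K, t * fN (N + 1 + i + 1)
        = t * ∑ i ∈ Finset.range K, fN (N + 1 + i + 1) := by rw [Finset.mul_sum]
      _ ≤ t * ∫ x in ((N:ℝ)+1)..((N:ℝ)+1+K), pf s (t * x) := mul_le_mul_of_nonneg_left h ht.le
      _ = t * (t⁻¹ * ∫ y in (t*((N:ℝ)+1))..(t*((N:ℝ)+1+K)), pf s y) := by rw [hscale ht]
      _ = ∫ y in (t*((N:ℝ)+1))..(t*((N:ℝ)+1+K)), pf s y := by
          rw [← mul_assoc, mul_inv_cancel₀ ht.ne', one_mul]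
      _ = ∫ y in Ioc (t*((N:ℝ)+1)) (t*((N:ℝ)+1+K)), pf s y := by
          refine intervalIntegral.integral_of_le ?_
          have : (0:ℝ) ≤ K := Nat.cast_nonneg K
          nlinarith
  -- assemble
  have hg1 : (∫ y in Ioc (0:ℝ) (t*N), pf s y) + (∫ y in Ioc (t*(N:ℝ)) (t*((N:ℝ)+1)), pf s y)
      = ∫ y in Ioc (0:ℝ) (t*((N:ℝ)+1)), pf s y := gadd hs (by positivity) (by nlinarith)
  have hg2 : (∫ y in Ioc (0:ℝ) (t*((N:ℝ)+1)), pf s y)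
      + (∫ y in Ioc (t*((N:ℝ)+1)) (t*((N:ℝ)+1+K)), pf s y)
      = ∫ y in Ioc (0:ℝ) (t*((N:ℝ)+1+K)), pf s y := by
    refine gadd hs (by positivity) ?_
    have : (0:ℝ) ≤ K := Nat.cast_nonneg K
    nlinarith
  have hwin : 0 ≤ ∫ y in Ioc (t*(N:ℝ)) (t*((N:ℝ)+1)), pf s y :=
    setIntegral_nonneg measurableSet_Ioc (fun y hy => pf_nonneg ((by positivity : (0:ℝ) ≤ t*(N:ℝ)).trans hy.1.le))
  have hgle := gle (s := s) (x := t*((N:ℝ)+1+K)) hs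
  simp only [EE]
  linarith [hA, hexc2, hB]

lemma lower (hs : s < 1) (ht : 0 < t) (K : ℕ) :
    (∫ y in Ioc (0:ℝ) (t*((⌊max 0 (-s) / t⌋₊ : ℝ)+1+K)), pf s y) - EE s t
      ≤ ∑ n ∈ Finset.range (⌊max 0 (-s) / t⌋₊ + 1 + K), (t * pf s (t * ((n:ℝ) + 1))) := by
  set N := ⌊max 0 (-s) / t⌋₊ with hNdef
  set fN : ℕ → ℝ := fun n => pf s (t * n) with hfN
  have hfN0 : ∀ n : ℕ, 0 ≤ fN n := fun n => pf_nonneg (by positivity)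
  have hNt := (floor_facts (s := s) ht).1
  have hNt' := (floor_facts (s := s) ht).2
  rw [← hNdef] at hNt hNt'
  have hsum0 : ∑ n ∈ Finset.range (N + 1 + K), (t * pf s (t * ((n:ℝ) + 1)))
      = ∑ n ∈ Finset.range (N + 1 + K), t * fN (n + 1) := by
    refine Finset.sum_congr rfl (fun n _ => ?_)
    simp only [hfN]
    congr 2
    push_cast
    ring
  rw [hsum0, Finset.sum_range_add, Finset.sum_range_succ]
  -- Part A lower
  have hA : (∫ y in Ioc (0:ℝ) (t*N), pf s y) ≤ ∑ n ∈ Finset.range N, t * fN (n + 1) := by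
    have h := MonotoneOn.integral_le_sum (x₀ := 0) (a := N)
      (f := fun x : ℝ => pf s (t * x)) (by simpa using Fmono (s := s) ht)
    have hconv : ∑ i ∈ Finset.range N, pf s (t * ((0:ℝ) + ((i+1 : ℕ) : ℝ)))
        = ∑ i ∈ Finset.range N, fN (i + 1) := by
      refine Finset.sum_congr rfl (fun n _ => ?_)
      simp only [hfN]
      congr 2
      push_cast
      ring
    rw [hconv] at h
    have h2 : (∫ x in (0:ℝ)..(0 + N), pf s (t * x)) = t⁻¹ * ∫ y in Ioc (0:ℝ) (t*N), pf s y := by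
      rw [hscale ht]
      rw [mul_zero, zero_add, intervalIntegral.integral_of_le (by positivity)]
    rw [h2] at h
    calc (∫ y in Ioc (0:ℝ) (t*N), pf s y)
        = t * (t⁻¹ * ∫ y in Ioc (0:ℝ) (t*N), pf s y) := by
          rw [← mul_assoc, mul_inv_cancel₀ ht.ne', one_mul]
      _ ≤ t * ∑ i ∈ Finset.range N, fN (i + 1) := mul_le_mul_of_nonneg_left h ht.le
      _ = ∑ n ∈ Finset.range N, t * fN (n + 1) := by rw [Finset.mul_sum]
  -- Part B lower
  have hB : (∫ y in Ioc (t*((N:ℝ)+1)) (t*((N:ℝ)+1+K)), pf s y) - t * fN (N + 1)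
      ≤ ∑ i ∈ Finset.range K, t * fN (N + 1 + i + 1) := by
    have h := AntitoneOn.integral_le_sum (x₀ := (N:ℝ) + 1) (a := K)
      (f := fun x : ℝ => pf s (t * x))
      ((Fanti (s := s) ht).mono (fun x hx => hx.1))
    have hconv : ∑ i ∈ Finset.range K, pf s (t * (((N:ℝ) + 1) + (i : ℕ)))
        = ∑ i ∈ Finset.range K, fN (N + 1 + i) := by
      refine Finset.sum_congr rfl (fun n _ => ?_)
      simp only [hfN]
      congr 2
      push_cast
      ring
    rw [hconv] at h
    have h2 : (∫ x in ((N:ℝ)+1)..((N:ℝ)+1+K), pf s (t * x))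
        = t⁻¹ * ∫ y in Ioc (t*((N:ℝ)+1)) (t*((N:ℝ)+1+K)), pf s y := by
      rw [hscale ht]
      congr 1
      refine intervalIntegral.integral_of_le ?_
      have : (0:ℝ) ≤ K := Nat.cast_nonneg K
      nlinarith
    rw [h2] at h
    -- shift: ∑ fN (N+1+i+1) = ∑ fN (N+1+i) + fN (N+1+K) - fN (N+1)
    have e1 := Finset.sum_range_succ (fun i : ℕ => fN (N + 1 + i)) K
    have e2 := Finset.sum_range_succ' (fun i : ℕ => fN (N + 1 + i)) K
    have hshift : ∑ i ∈ Finset.range K, fN (N + 1 + i + 1)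
        = (∑ i ∈ Finset.range K, fN (N + 1 + i)) + fN (N + 1 + K) - fN (N + 1) := by
      have : ∀ i : ℕ, fN (N + 1 + (i + 1)) = fN (N + 1 + i + 1) := fun i => by ring_nf
      simp only [this] at e2
      simp only [add_zero] at e2
      linarith [e1, e2]
    have hmul := mul_le_mul_of_nonneg_left h ht.le
    rw [← mul_assoc, mul_inv_cancel₀ ht.ne', one_mul] at hmul
    calc (∫ y in Ioc (t*((N:ℝ)+1)) (t*((N:ℝ)+1+K)), pf s y) - t * fN (N + 1)
        ≤ t * (∑ i ∈ Finset.range K, fN (N + 1 + i)) - t * fN (N + 1) := by linarith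
      _ ≤ t * ((∑ i ∈ Finset.range K, fN (N + 1 + i)) + fN (N + 1 + K) - fN (N + 1)) := by
          nlinarith [hfN0 (N + 1 + K)]
      _ = t * ∑ i ∈ Finset.range K, fN (N + 1 + i + 1) := by rw [hshift]
      _ = ∑ i ∈ Finset.range K, t * fN (N + 1 + i + 1) := by rw [Finset.mul_sum]
  -- assemble
  have hg1 : (∫ y in Ioc (0:ℝ) (t*N), pf s y) + (∫ y in Ioc (t*(N:ℝ)) (t*((N:ℝ)+1)), pf s y)
      = ∫ y in Ioc (0:ℝ) (t*((N:ℝ)+1)), pf s y := gadd hs (by positivity) (by nlinarith)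
  have hg2 : (∫ y in Ioc (0:ℝ) (t*((N:ℝ)+1)), pf s y)
      + (∫ y in Ioc (t*((N:ℝ)+1)) (t*((N:ℝ)+1+K)), pf s y)
      = ∫ y in Ioc (0:ℝ) (t*((N:ℝ)+1+K)), pf s y := by
    refine gadd hs (by positivity) ?_
    have : (0:ℝ) ≤ K := Nat.cast_nonneg K
    nlinarith
  have hwin : (∫ y in Ioc (t*(N:ℝ)) (t*((N:ℝ)+1)), pf s y) ≤ t * CC s + WW s t := by
    have h := WIN (c := t * (N:ℝ)) hs ht rfl
    have : t * (N:ℝ) + t = t*((N:ℝ)+1) := by ring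
    rwa [this] at h
  have hCC : 0 ≤ t * CC s := mul_nonneg ht.le CC_nonneg
  have hWW : (0:ℝ) ≤ WW s t := WW_nonneg
  simp only [EE]
  linarith [hA, hB]

end MainEst

noncomputable def SS (s t : ℝ) : ℝ := ∑' n : ℕ, t * pf s (t * ((n:ℝ) + 1))

section Limits

variable {s t : ℝ}

lemma term_nonneg (ht : 0 < t) (n : ℕ) : 0 ≤ t * pf s (t * ((n:ℝ) + 1)) :=
  mul_nonneg ht.le (pf_nonneg (by positivity))

lemma partial_le (hs : s < 1) (ht : 0 < t) (J : ℕ) :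
    ∑ n ∈ Finset.range J, (t * pf s (t * ((n:ℝ) + 1))) ≤ II s + EE s t := by
  calc ∑ n ∈ Finset.range J, (t * pf s (t * ((n:ℝ) + 1)))
      ≤ ∑ n ∈ Finset.range (⌊max 0 (-s) / t⌋₊ + 1 + J), (t * pf s (t * ((n:ℝ) + 1))) := by
        refine Finset.sum_le_sum_of_subset_of_nonneg (Finset.range_subset_range.2 (by omega))
          (fun i _ _ => term_nonneg ht i)
    _ ≤ II s + EE s t := upper hs ht J

lemma SS_summable (hs : s < 1) (ht : 0 < t) :
    Summable (fun n : ℕ => t * pf s (t * ((n:ℝ) + 1))) :=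
  summable_of_sum_range_le (term_nonneg ht) (partial_le hs ht)

lemma SS_le (hs : s < 1) (ht : 0 < t) : SS s t ≤ II s + EE s t :=
  Real.tsum_le_of_sum_range_le (term_nonneg ht) (partial_le hs ht)

lemma SS_ge (hs : s < 1) (ht : 0 < t) : II s - EE s t ≤ SS s t := by
  set N := ⌊max 0 (-s) / t⌋₊ with hNdef
  have hK : ∀ K : ℕ, (∫ y in Ioc (0:ℝ) (t*((N:ℝ)+1+K)), pf s y) - EE s t ≤ SS s t := by
    intro K
    exact (lower hs ht K).trans ((SS_summable hs ht).sum_le_tsum (Finset.range (N+1+K))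
      (fun i _ => term_nonneg ht i))
  have hU : (⋃ K : ℕ, Ioc (0:ℝ) (t*((N:ℝ)+1+K))) = Ioi 0 := by
    ext x
    simp only [mem_iUnion, mem_Ioc, mem_Ioi]
    constructor
    · rintro ⟨K, h1, _⟩; exact h1
    · intro hx
      obtain ⟨K, hKx⟩ := exists_nat_ge (x / t)
      refine ⟨K, hx, ?_⟩
      have h1 : x ≤ (K:ℝ) * t := (div_le_iff₀ ht).1 hKx
      nlinarith [Nat.cast_nonneg (α := ℝ) N]
  have hmono : Monotone (fun K : ℕ => Ioc (0:ℝ) (t*((N:ℝ)+1+K))) := by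
    intro K K' hKK
    refine Ioc_subset_Ioc_right (mul_le_mul_of_nonneg_left ?_ ht.le)
    have : (K:ℝ) ≤ (K':ℝ) := by exact_mod_cast hKK
    linarith
  have htend := tendsto_setIntegral_of_monotone (f := pf s) (μ := volume)
    (fun K : ℕ => measurableSet_Ioc) hmono (by rw [hU]; exact pf_integrableOn hs)
  rw [hU] at htend
  have htend2 : Tendsto (fun K : ℕ => (∫ y in Ioc (0:ℝ) (t*((N:ℝ)+1+K)), pf s y) - EE s t)
      atTop (𝓝 (II s - EE s t)) := htend.sub tendsto_const_nhds
  exact le_of_tendsto htend2 (Eventually.of_forall hK)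

lemma WW_le (hs : s < 1) (ht : 0 < t) : WW s t ≤ t ^ (1 - s) / (1 - s) := by
  have hs1 : (0:ℝ) < 1 - s := by linarith
  have hint : IntegrableOn (fun y : ℝ => y ^ (-s)) (Ioc 0 t) := by
    have := intervalIntegral.intervalIntegrable_rpow' (a := 0) (b := t)
      (by linarith : (-1:ℝ) < -s)
    rwa [intervalIntegrable_iff_integrableOn_Ioc_of_le ht.le] at this
  have h1 : WW s t ≤ ∫ y in Ioc (0:ℝ) t, y ^ (-s) := by
    refine setIntegral_mono_on (pf_int_Ioc hs le_rfl) hint measurableSet_Ioc (fun y hy => ?_)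
    have he : Real.exp (-y) ≤ 1 := by
      rw [show (1:ℝ) = Real.exp 0 from (Real.exp_zero).symm]
      exact Real.exp_le_exp.mpr (by linarith [hy.1])
    calc pf s y = y ^ (-s) * Real.exp (-y) := rfl
      _ ≤ y ^ (-s) * 1 := mul_le_mul_of_nonneg_left he (Real.rpow_nonneg hy.1.le _)
      _ = y ^ (-s) := mul_one _
  have h2 : (∫ y in Ioc (0:ℝ) t, y ^ (-s)) = t ^ (1 - s) / (1 - s) := by
    rw [← intervalIntegral.integral_of_le ht.le]
    rw [integral_rpow (Or.inl (by linarith : (-1:ℝ) < -s))]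
    rw [Real.zero_rpow (by linarith : -s + 1 ≠ 0)]
    rw [show -s + 1 = 1 - s from by ring]
    ring
  linarith

lemma EE_tendsto (hs : s < 1) : Tendsto (EE s) (𝓝[>] (0:ℝ)) (𝓝 0) := by
  have hs1 : (0:ℝ) < 1 - s := by linarith
  have hBB : Tendsto (fun t : ℝ => 2 * (t * CC s + t ^ (1 - s) / (1 - s)))
      (𝓝[>] (0:ℝ)) (𝓝 0) := by
    have h1 : Tendsto (fun t : ℝ => t * CC s) (𝓝 (0:ℝ)) (𝓝 0) := by
      simpa [Pi.mul_def] using (continuous_id.mul continuous_const).tendsto (0:ℝ)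
    have h2 : Tendsto (fun t : ℝ => t ^ (1 - s)) (𝓝 (0:ℝ)) (𝓝 0) := by
      have hc := (Real.continuousAt_rpow_const 0 (1 - s) (Or.inr hs1.le)).tendsto
      rwa [Real.zero_rpow hs1.ne'] at hc
    have := ((h1.add (h2.div_const (1 - s))).const_mul 2).mono_left
      (nhdsWithin_le_nhds (s := Ioi (0:ℝ)))
    simpa using this
  refine tendsto_of_tendsto_of_tendsto_of_le_of_le' tendsto_const_nhds hBB ?_ ?_
  · filter_upwards [self_mem_nhdsWithin] with t (ht : t ∈ Ioi (0:ℝ))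
    have : 0 ≤ t * CC s := mul_nonneg (le_of_lt ht) CC_nonneg
    have := WW_nonneg (s := s) (t := t)
    simp only [EE]
    linarith
  · filter_upwards [self_mem_nhdsWithin] with t (ht : t ∈ Ioi (0:ℝ))
    have := WW_le hs ht
    simp only [EE]
    linarith

lemma SS_tendsto (hs : s < 1) : Tendsto (SS s) (𝓝[>] (0:ℝ)) (𝓝 (II s)) := by
  have hlow : Tendsto (fun t => II s - EE s t) (𝓝[>] (0:ℝ)) (𝓝 (II s)) := by
    simpa using (tendsto_const_nhds (x := II s) (f := 𝓝[>] (0:ℝ))).sub (EE_tendsto hs)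
  have hup : Tendsto (fun t => II s + EE s t) (𝓝[>] (0:ℝ)) (𝓝 (II s)) := by
    simpa using (tendsto_const_nhds (x := II s) (f := 𝓝[>] (0:ℝ))).add (EE_tendsto hs)
  refine tendsto_of_tendsto_of_tendsto_of_le_of_le' hlow hup ?_ ?_
  · filter_upwards [self_mem_nhdsWithin] with t (ht : t ∈ Ioi (0:ℝ))
    exact SS_ge hs ht
  · filter_upwards [self_mem_nhdsWithin] with t (ht : t ∈ Ioi (0:ℝ))
    exact SS_le hs ht

lemma II_eq (hs : s < 1) : II s = Real.Gamma (1 - s) := by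
  rw [Real.Gamma_eq_integral (by linarith : (0:ℝ) < 1 - s)]
  refine setIntegral_congr_fun measurableSet_Ioi (fun x hx => ?_)
  simp only [pf]
  rw [mul_comm]
  congr 1
  norm_num

end Limits

end PolyAux


/-- The polylogarithm `Li_s(p) = ∑_{k=1}^∞ p^k / k^s`, defined for real `s` on `[0,1)`. -/
noncomputable def Li (s : ℝ) (p : ℝ) : ℝ := ∑' k : ℕ, p ^ (k + 1) / ((k : ℝ) + 1) ^ s

/-- For every real `s < 1`,
`lim_{z → 1⁻} (−ln z)^{1−s} · Li_s(z) = Γ(1−s)`, i.e. `Li_s(z) ~ Γ(1−s)(−ln z)^{s−1}`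
as `z → 1⁻`,  where `Γ` is the (real) Gamma function. -/
theorem polylog_asymptotic_near_one (s : ℝ) (hs : s < 1) :
    Filter.Tendsto (fun z : ℝ => (-Real.log z) ^ (1 - s) * Li s z)
      (nhdsWithin 1 (Set.Iio 1)) (nhds (Real.Gamma (1 - s))) := by
  have h1 : Ioi (0:ℝ) ∈ 𝓝[<] (1:ℝ) := mem_nhdsWithin_of_mem_nhds (Ioi_mem_nhds one_pos)
  have hlog : Tendsto (fun z : ℝ => -Real.log z) (𝓝[<] (1:ℝ)) (𝓝[>] (0:ℝ)) := by
    apply tendsto_nhdsWithin_of_tendsto_nhds_of_eventually_within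
    · have h := (Real.continuousAt_log (one_ne_zero)).neg.tendsto
      rw [Pi.neg_apply, Real.log_one, neg_zero] at h
      exact h.mono_left nhdsWithin_le_nhds
    · filter_upwards [h1, self_mem_nhdsWithin] with z hz0 (hz1 : z ∈ Iio 1)
      exact neg_pos.mpr (Real.log_neg hz0 hz1)
  have hcomp := (PolyAux.SS_tendsto hs).comp hlog
  rw [PolyAux.II_eq hs] at hcomp
  refine hcomp.congr' ?_
  filter_upwards [h1, self_mem_nhdsWithin] with z hz0 (hz1 : z ∈ Iio 1)
  have ht : 0 < -Real.log z := neg_pos.mpr (Real.log_neg hz0 hz1)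
  set t := -Real.log z with htdef
  have hz : z = Real.exp (-t) := by
    rw [htdef, neg_neg, Real.exp_log hz0]
  show PolyAux.SS s t = t ^ (1 - s) * Li s z
  rw [Li, ← tsum_mul_left]
  simp only [PolyAux.SS]
  apply tsum_congr
  intro n
  have e1 : (t * ((n:ℝ)+1)) ^ (-s) = t ^ (-s) * ((n:ℝ)+1) ^ (-s) :=
    Real.mul_rpow ht.le (by positivity)
  have e2 : Real.exp (-(t * ((n:ℝ)+1))) = z ^ (n+1) := by
    rw [hz, ← Real.exp_nat_mul]
    congr 1
    push_cast
    ring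
  have e3 : t ^ ((1:ℝ) - s) = t * t ^ (-s) := by
    rw [show (1:ℝ) - s = 1 + (-s) from by ring, Real.rpow_add ht, Real.rpow_one]
  have e4 : ((n:ℝ)+1) ^ (-s) = (((n:ℝ)+1) ^ s)⁻¹ := Real.rpow_neg (by positivity) s
  calc t * PolyAux.pf s (t * ((n:ℝ)+1))
      = t * ((t * ((n:ℝ)+1)) ^ (-s) * Real.exp (-(t * ((n:ℝ)+1)))) := rfl
    _ = t * (t ^ (-s) * ((n:ℝ)+1) ^ (-s) * (z ^ (n+1))) := by rw [e1, e2]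
    _ = t ^ ((1:ℝ) - s) * (z ^ (n+1) / ((n:ℝ)+1) ^ s) := by
        rw [e3, e4, div_eq_mul_inv]
        ring
end

section
/- Let m be a positive integer and let s be a real number with s < 1 − 1/m. Then the m-th moment of the random variable Y_s with quantile function Li_s is infinite; that is, the extended-real integral ∫_0^1 Li_s(p)^m dp = +∞ (equivalently, p ↦ Li_s(p)^m is not integrable on [0,1)). -/
open MeasureTheory

lemma Li_summable (s : ℝ) {p : ℝ} (hp0 : 0 ≤ p) (hp1 : p < 1) :
    Summable (fun k : ℕ => p ^ (k + 1) / ((k : ℝ) + 1) ^ s) := by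
  set d : ℕ := ⌈-s⌉₊ with hd
  have h0 : Summable (fun k : ℕ => ((k : ℝ)) ^ d * p ^ k) :=
    summable_pow_mul_geometric_of_norm_lt_one d (by rwa [Real.norm_of_nonneg hp0])
  have h1 : Summable (fun k : ℕ => ((k : ℝ) + 1) ^ d * p ^ (k + 1)) := by
    have := (summable_nat_add_iff (f := fun k : ℕ => ((k : ℝ)) ^ d * p ^ k) 1).2 h0
    simpa using this
  apply h1.of_nonneg_of_le
  · intro k; positivity
  · intro k
    have hk1 : (1 : ℝ) ≤ (k : ℝ) + 1 := le_add_of_nonneg_left (Nat.cast_nonneg k)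
    have : ((k : ℝ) + 1) ^ (-s) ≤ ((k : ℝ) + 1) ^ (d : ℝ) :=
      Real.rpow_le_rpow_of_exponent_le hk1 (Nat.le_ceil _)
    rw [Real.rpow_natCast] at this
    calc p ^ (k + 1) / ((k : ℝ) + 1) ^ s
        = p ^ (k + 1) * ((k : ℝ) + 1) ^ (-s) := by
          rw [Real.rpow_neg (by positivity), div_eq_mul_inv]
      _ ≤ p ^ (k + 1) * ((k : ℝ) + 1) ^ d := by
          apply mul_le_mul_of_nonneg_left this (by positivity)
      _ = ((k : ℝ) + 1) ^ d * p ^ (k + 1) := by ring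

lemma Li_nonneg (s : ℝ) {p : ℝ} (hp0 : 0 ≤ p) : 0 ≤ Li s p :=
  tsum_nonneg (fun k => by positivity)


lemma Li_lower {m : ℕ} (hm : 0 < m) {s : ℝ} (hs0 : 0 ≤ s) (hs : s ≤ 1 - 1 / m)
    {p : ℝ} (hp : p ∈ Set.Ico (1/2 : ℝ) 1) :
    Real.exp (-4) * ((1 - p)⁻¹) ^ ((m : ℝ)⁻¹) ≤ Li s p := by
  obtain ⟨hp2, hp1⟩ := hp
  have hp0 : (0:ℝ) ≤ p := by linarith
  set t : ℝ := 1 - p with ht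
  have ht0 : 0 < t := by simp [ht]; linarith
  have ht2 : t ≤ 1/2 := by simp [ht]; linarith
  have hti : (2:ℝ) ≤ t⁻¹ := by
    rw [le_inv_comm₀] <;> first | linarith | norm_num
  set n : ℕ := ⌈t⁻¹⌉₊ with hn
  have hn1 : (1:ℝ) ≤ n := by
    have := Nat.le_ceil t⁻¹; linarith
  have hnt : t⁻¹ ≤ (n:ℝ) := Nat.le_ceil _
  have hnub : (n:ℝ) ≤ t⁻¹ + 1 := (Nat.ceil_lt_add_one (by positivity)).le
  have hnpos : (0:ℝ) < n := by linarith
  -- partial sum lower bound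
  have hsum : ∑ k ∈ Finset.range n, p ^ (k+1) / ((k:ℝ)+1) ^ s ≤ Li s p :=
    (Li_summable s hp0 hp1).sum_le_tsum _ (fun k _ => by positivity)
  have hterm : ∀ k ∈ Finset.range n, p ^ n / (n:ℝ) ^ s ≤ p ^ (k+1) / ((k:ℝ)+1) ^ s := by
    intro k hk
    have hkn : k + 1 ≤ n := Finset.mem_range.1 hk
    have h1 : p ^ n ≤ p ^ (k+1) := pow_le_pow_of_le_one hp0 hp1.le hkn
    have h2 : ((k:ℝ)+1) ^ s ≤ (n:ℝ) ^ s := by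
      apply Real.rpow_le_rpow (by positivity) (by exact_mod_cast hkn) hs0
    exact div_le_div₀ (by positivity) h1 (by positivity) h2
  have hsum2 : (n:ℝ) * (p ^ n / (n:ℝ) ^ s) ≤ Li s p := by
    calc (n:ℝ) * (p ^ n / (n:ℝ) ^ s)
        = ∑ k ∈ Finset.range n, p ^ n / (n:ℝ) ^ s := by
          rw [Finset.sum_const, Finset.card_range, nsmul_eq_mul]
      _ ≤ ∑ k ∈ Finset.range n, p ^ (k+1) / ((k:ℝ)+1) ^ s := Finset.sum_le_sum hterm
      _ ≤ Li s p := hsum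
  -- p ^ n ≥ exp (-4)
  have hexp : Real.exp (-4) ≤ p ^ n := by
    have h1t : Real.exp (-2 * t) ≤ 1 - t := by
      have h := Real.add_one_le_exp (2 * t)
      have hpos := Real.exp_pos (-2 * t)
      have hmul : Real.exp (-2 * t) * Real.exp (2 * t) = 1 := by
        rw [← Real.exp_add]; simp
      nlinarith [mul_le_mul_of_nonneg_left h hpos.le]
    have h2 : Real.exp (-2 * t) ^ n ≤ (1 - t) ^ n :=
      pow_le_pow_left₀ (Real.exp_pos _).le h1t n
    have h3 : Real.exp (-4) ≤ Real.exp (-2 * t) ^ n := by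
      rw [← Real.exp_nat_mul]
      apply Real.exp_le_exp.2
      have : t * n ≤ 2 := by
        calc t * n ≤ t * (t⁻¹ + 1) := by nlinarith
          _ = 1 + t := by field_simp
          _ ≤ 2 := by linarith
      nlinarith
    calc Real.exp (-4) ≤ Real.exp (-2*t) ^ n := h3
      _ ≤ (1 - t) ^ n := h2
      _ = p ^ n := by rw [ht]; ring_nf
  -- n / n^s = n^(1-s) ≥ (t⁻¹)^(1/m)
  have hrp : ((1:ℝ) - p)⁻¹ ^ ((m:ℝ)⁻¹) ≤ (n:ℝ) / (n:ℝ) ^ s := by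
    have e1 : (n:ℝ) / (n:ℝ) ^ s = (n:ℝ) ^ (1 - s) := by
      rw [Real.rpow_sub hnpos, Real.rpow_one]
    rw [e1, ← ht]
    have hminv : (m:ℝ)⁻¹ ≤ 1 - s := by
      have : 1 / (m:ℝ) ≤ 1 - s := by linarith
      simpa [one_div] using this
    calc (t⁻¹) ^ ((m:ℝ)⁻¹) ≤ (n:ℝ) ^ ((m:ℝ)⁻¹) :=
          Real.rpow_le_rpow (by positivity) hnt (by positivity)
      _ ≤ (n:ℝ) ^ (1 - s) := Real.rpow_le_rpow_of_exponent_le hn1 hminv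
  calc Real.exp (-4) * ((1 - p)⁻¹) ^ ((m : ℝ)⁻¹)
      ≤ p ^ n * ((n:ℝ) / (n:ℝ) ^ s) := by
        apply mul_le_mul hexp hrp (by positivity) (by positivity)
    _ = (n:ℝ) * (p ^ n / (n:ℝ) ^ s) := by ring
    _ ≤ Li s p := hsum2



lemma Li_anti {s s' : ℝ} (hss' : s ≤ s') {p : ℝ} (hp0 : 0 ≤ p) (hp1 : p < 1) :
    Li s' p ≤ Li s p := by
  apply (Li_summable s' hp0 hp1).tsum_le_tsum _ (Li_summable s hp0 hp1)
  intro k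
  have hk1 : (1 : ℝ) ≤ (k : ℝ) + 1 := le_add_of_nonneg_left (Nat.cast_nonneg k)
  apply div_le_div_of_nonneg_left (by positivity) (by positivity)
  exact Real.rpow_le_rpow_of_exponent_le hk1 hss'

/-- Let `m` be a positive integer and `s < 1 − 1/m` real. Then the `m`-th
moment of the random variable with quantile function `Li_s` is infinite:
`∫_0^1 Li_s(p)^m dp = +∞` as an extended-real integral (equivalently, `p ↦ Li_s(p)^m`
is not integrable on `[0,1)`). -/
theorem polylog_moment_infinite (m : ℕ) (hm : 0 < m) (s : ℝ) (hs : s < 1 - 1 / m) :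
    ∫⁻ p in Set.Ico (0:ℝ) 1, ENNReal.ofReal (Li s p ^ m) = ⊤ := by
  have hm0 : ((m:ℝ)) ≠ 0 := Nat.cast_ne_zero.2 hm.ne'
  have hm1 : (1:ℝ) / m ≤ 1 := by
    rw [div_le_one (by exact_mod_cast hm)]; exact_mod_cast hm
  set s' : ℝ := max s 0 with hs'def
  have hs'0 : 0 ≤ s' := le_max_right _ _
  have hs' : s' ≤ 1 - 1 / m := max_le hs.le (by linarith)
  -- pointwise bound on [1/2, 1)
  have key : ∀ p ∈ Set.Ico (1/2 : ℝ) 1,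
      Real.exp (-4) ^ m * (1 - p)⁻¹ ≤ Li s p ^ m := by
    intro p hp
    obtain ⟨hp2, hp1⟩ := hp
    have hp0 : (0:ℝ) ≤ p := by linarith
    have htp : (0:ℝ) ≤ (1 - p)⁻¹ := by
      have : (0:ℝ) < 1 - p := by linarith
      positivity
    have hL : Real.exp (-4) * ((1 - p)⁻¹) ^ ((m : ℝ)⁻¹) ≤ Li s p :=
      (Li_lower hm hs'0 hs' ⟨hp2, hp1⟩).trans (Li_anti (le_max_left s 0) hp0 hp1)
    have hL0 : 0 ≤ Real.exp (-4) * ((1 - p)⁻¹) ^ ((m : ℝ)⁻¹) := by positivity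
    have hpow := pow_le_pow_left₀ hL0 hL m
    calc Real.exp (-4) ^ m * (1 - p)⁻¹
        = (Real.exp (-4) * ((1 - p)⁻¹) ^ ((m : ℝ)⁻¹)) ^ m := by
          rw [mul_pow, ← Real.rpow_natCast (((1 - p)⁻¹) ^ ((m:ℝ)⁻¹)) m,
            ← Real.rpow_mul htp, inv_mul_cancel₀ hm0, Real.rpow_one]
      _ ≤ Li s p ^ m := hpow
  -- chunks
  set a : ℕ → ℝ := fun k => 1 - (1/2 : ℝ) ^ (k + 1) with ha
  have hao : ∀ k, a k = 1 - (1/2 : ℝ) ^ (k+1) := fun k => rfl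
  have ha_half : ∀ k, (1/2 : ℝ) ≤ a k := by
    intro k
    have : (1/2:ℝ) ^ (k+1) ≤ (1/2:ℝ) ^ 1 :=
      pow_le_pow_of_le_one (by norm_num) (by norm_num) (by omega)
    simp only [hao]; norm_num at this ⊢; linarith
  have ha_lt : ∀ k, a k < 1 := by
    intro k
    have : (0:ℝ) < (1/2:ℝ) ^ (k+1) := by positivity
    simp only [hao]; linarith
  have ha_mono : ∀ i j : ℕ, i ≤ j → a i ≤ a j := by
    intro i j hij
    have : (1/2:ℝ) ^ (j+1) ≤ (1/2:ℝ) ^ (i+1) :=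
      pow_le_pow_of_le_one (by norm_num) (by norm_num) (by omega)
    simp only [hao]; linarith
  set J : ℕ → Set ℝ := fun k => Set.Ico (a k) (a (k+1)) with hJ
  have hJmeas : ∀ k, MeasurableSet (J k) := fun k => measurableSet_Ico
  have hJdisj : Pairwise (Function.onFun Disjoint J) := by
    have hd : ∀ i j : ℕ, i < j → Disjoint (J i) (J j) := by
      intro i j hij
      rw [hJ, Set.Ico_disjoint_Ico]
      exact le_trans (min_le_left _ _) (le_trans (ha_mono _ _ hij) (le_max_right _ _))
    intro i j hij
    rcases hij.lt_or_gt with h | h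
    · exact hd i j h
    · exact (hd j i h).symm
  have hJsub : ∀ k, J k ⊆ Set.Ico (1/2 : ℝ) 1 := by
    intro k p hp
    exact ⟨le_trans (ha_half k) hp.1, lt_of_lt_of_le hp.2 (ha_lt (k+1)).le⟩
  have hUnion : (⋃ k, J k) ⊆ Set.Ico (0:ℝ) 1 := by
    intro p hp
    obtain ⟨k, hk⟩ := Set.mem_iUnion.1 hp
    have := hJsub k hk
    exact ⟨by linarith [this.1], this.2⟩
  -- lower bound on each chunk
  have chunk : ∀ k : ℕ, ENNReal.ofReal (Real.exp (-4) ^ m * (1/2)) ≤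
      ∫⁻ p in J k, ENNReal.ofReal (Li s p ^ m) := by
    intro k
    have hbound : ∀ p ∈ J k,
        ENNReal.ofReal (Real.exp (-4) ^ m * 2 ^ (k+1)) ≤ ENNReal.ofReal (Li s p ^ m) := by
      intro p hp
      apply ENNReal.ofReal_le_ofReal
      have hmem := hJsub k hp
      have h1p : 0 < 1 - p := by linarith [hmem.2]
      have h2 : (1 - p) ≤ (1/2:ℝ) ^ (k+1) := by
        have := hp.1; simp only [hao] at this; linarith
      have h3 : ((1/2:ℝ) ^ (k+1))⁻¹ ≤ (1 - p)⁻¹ := by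
        apply inv_anti₀ h1p h2
      have h4 : ((1/2:ℝ) ^ (k+1))⁻¹ = 2 ^ (k+1) := by
        rw [← inv_pow]; norm_num
      calc Real.exp (-4) ^ m * 2 ^ (k+1)
          = Real.exp (-4) ^ m * ((1/2:ℝ) ^ (k+1))⁻¹ := by rw [h4]
        _ ≤ Real.exp (-4) ^ m * (1 - p)⁻¹ := by
            apply mul_le_mul_of_nonneg_left h3 (by positivity)
        _ ≤ Li s p ^ m := key p hmem
    calc ENNReal.ofReal (Real.exp (-4) ^ m * (1/2))
        = ENNReal.ofReal (Real.exp (-4) ^ m * 2 ^ (k+1)) * volume (J k) := by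
          rw [hJ]
          simp only []
          rw [Real.volume_Ico]
          have hv : a (k+1) - a k = (1/2:ℝ) ^ (k+2) := by
            simp only [hao]; ring
          rw [hv, ← ENNReal.ofReal_mul (by positivity)]
          congr 1
          have h2k : (2:ℝ) ^ (k+1) * (1/2:ℝ) ^ (k+2) = 1/2 := by
            have hne : (2:ℝ) ^ (k+1) ≠ 0 := by positivity
            field_simp
            ring_nf; rw [← mul_pow]; norm_num
          rw [mul_assoc, h2k]
      _ ≤ ∫⁻ p in J k, ENNReal.ofReal (Li s p ^ m) := by
          rw [← setLIntegral_const (J k) (ENNReal.ofReal (Real.exp (-4) ^ m * 2 ^ (k+1)))]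
          apply lintegral_mono_ae
          rw [ae_restrict_iff' (hJmeas k)]
          filter_upwards with p hp using hbound p hp
  -- assemble
  refine top_unique ?_
  calc (⊤ : ENNReal) = ∑' (_k : ℕ), ENNReal.ofReal (Real.exp (-4) ^ m * (1/2)) := by
        rw [ENNReal.tsum_const_eq_top_of_ne_zero]
        simp only [ne_eq, ENNReal.ofReal_eq_zero, not_le]
        positivity
    _ ≤ ∑' k : ℕ, ∫⁻ p in J k, ENNReal.ofReal (Li s p ^ m) := ENNReal.tsum_le_tsum chunk
    _ = ∫⁻ p in ⋃ k, J k, ENNReal.ofReal (Li s p ^ m) :=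
        (lintegral_iUnion hJmeas hJdisj _).symm
    _ ≤ ∫⁻ p in Set.Ico (0:ℝ) 1, ENNReal.ofReal (Li s p ^ m) :=
        lintegral_mono_set hUnion
end
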